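/- Let $k$ be a field and let $R \subset k[x,t]$ be the $k$-subalgebra consisting of polynomials $\sum_m f_m(x) t^m$ such that $f_1(x) = x^{-1}f_0'(x)$ (i.e., $x$ divides $f_0'$ and $f_1 = f_0'/x$). Then $R$ is generated as a $k$-algebra by the six elements $x^2+2t,\ x^3+3xt,\ t^2,\ xt^2,\ t^3,\ xt^3$. -/
import Mathlib


open Polynomial

section Aux
variable (k : Type*) [Field k]
noncomputable def Ssub : Subalgebra k (Polynomial (Polynomial k)) where
  carrier := {p | (X : Polynomial k) * p.coeff 1 = derivative (p.coeff 0)}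
  add_mem' := by
    intro p q hp hq
    simp only [Set.mem_setOf_eq, coeff_add, derivative_add, mul_add] at *
    rw [hp, hq]
  mul_mem' := by
    intro p q hp hq
    simp only [Set.mem_setOf_eq] at *
    have h1 : (p * q).coeff 1 = p.coeff 0 * q.coeff 1 + p.coeff 1 * q.coeff 0 := by
      rw [coeff_mul, Finset.Nat.sum_antidiagonal_eq_sum_range_succ_mk]
      simp [Finset.sum_range_succ, add_comm]
    rw [h1, mul_coeff_zero, derivative_mul, mul_add, ← hp, ← hq]
    ring
  one_mem' := by simp [coeff_one]
  algebraMap_mem' := by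
    intro r
    show (X : Polynomial k) * (C (C r)).coeff 1 = derivative ((C (C r)).coeff 0)
    simp [coeff_C]

noncomputable def Gset : Set (Polynomial (Polynomial k)) :=
  {(C (X : Polynomial k)) ^ 2 + 2 * X,
   (C (X : Polynomial k)) ^ 3 + 3 * C (X : Polynomial k) * X,
   X ^ 2, C (X : Polynomial k) * X ^ 2, X ^ 3, C (X : Polynomial k) * X ^ 3}

noncomputable def Asub : Subalgebra k (Polynomial (Polynomial k)) := Algebra.adjoin k (Gset k)

theorem mem_Ssub (p : Polynomial (Polynomial k)) :
    p ∈ Ssub k ↔ (X : Polynomial k) * p.coeff 1 = derivative (p.coeff 0) := Iff.rfl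

theorem adjoin_le : Asub k ≤ Ssub k := by
  rw [Asub, Algebra.adjoin_le_iff]
  intro p hp
  rcases hp with h | h | h | h | h | h <;> subst h <;>
    rw [SetLike.mem_coe, mem_Ssub] <;>
    simp only [coeff_add, ← C_pow, coeff_C, coeff_ofNat_mul, coeff_X, coeff_X_pow, ← C_mul,
      coeff_mul_C, coeff_C_mul, derivative_C, derivative_X_pow, derivative_mul, derivative_X] <;>
    norm_num
  all_goals rw [map_ofNat]; ring

theorem gen_mem {p : Polynomial (Polynomial k)} (h : p ∈ Gset k) : p ∈ Asub k :=
  Algebra.subset_adjoin h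

theorem hu2 : (C (X : Polynomial k)) ^ 2 + 2 * X ∈ Asub k := gen_mem k (by left; rfl)
theorem hu3 : (C (X : Polynomial k)) ^ 3 + 3 * C (X : Polynomial k) * X ∈ Asub k :=
  gen_mem k (by right; left; rfl)
theorem hT2 : (X : Polynomial (Polynomial k)) ^ 2 ∈ Asub k := gen_mem k (by right; right; left; rfl)
theorem hXT2 : C (X : Polynomial k) * X ^ 2 ∈ Asub k := gen_mem k (by right; right; right; left; rfl)
theorem hT3 : (X : Polynomial (Polynomial k)) ^ 3 ∈ Asub k :=
  gen_mem k (by right; right; right; right; left; rfl)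
theorem hXT3 : C (X : Polynomial k) * X ^ 3 ∈ Asub k :=
  gen_mem k (by right; right; right; right; right; rfl)

theorem hXm : ∀ m, 2 ≤ m → (X : Polynomial (Polynomial k)) ^ m ∈ Asub k := by
  intro m
  induction m using Nat.strong_induction_on with
  | _ m ih =>
    match m with
    | 0 => intro h; exact absurd h (by omega)
    | 1 => intro h; exact absurd h (by omega)
    | 2 => intro _; exact hT2 k
    | 3 => intro _; exact hT3 k
    | (n+4) =>
      intro _
      have h1 : (X : Polynomial (Polynomial k)) ^ (n+4) = X ^ 2 * X ^ (n+2) := by ring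
      rw [h1]
      exact mul_mem (hT2 k) (ih (n+2) (by omega) (by omega))

theorem hCXm : ∀ m, 2 ≤ m → C (X : Polynomial k) * X ^ m ∈ Asub k := by
  intro m
  induction m using Nat.strong_induction_on with
  | _ m ih =>
    match m with
    | 0 => intro h; exact absurd h (by omega)
    | 1 => intro h; exact absurd h (by omega)
    | 2 => intro _; exact hXT2 k
    | 3 => intro _; exact hXT3 k
    | (n+4) =>
      intro _
      have h1 : C (X : Polynomial k) * X ^ (n+4) = (C (X : Polynomial k) * X ^ (n+2)) * X ^ 2 := by
        ring
      rw [h1]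
      exact mul_mem (ih (n+2) (by omega) (by omega)) (hT2 k)

theorem hL : ∀ a m, 2 ≤ m → (C (X : Polynomial k)) ^ a * X ^ m ∈ Asub k := by
  intro a
  induction a using Nat.strong_induction_on with
  | _ a ih =>
    match a with
    | 0 => intro m hm; simpa using hXm k m hm
    | 1 => intro m hm; simpa using hCXm k m hm
    | (b+2) =>
      intro m hm
      have key : (C (X : Polynomial k)) ^ (b+2) * X ^ m =
          ((C (X : Polynomial k)) ^ 2 + 2 * X) * ((C (X : Polynomial k)) ^ b * X ^ m)
          - 2 * ((C (X : Polynomial k)) ^ b * X ^ (m+1)) := by ring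
      rw [key]
      exact sub_mem (mul_mem (hu2 k) (ih b (by omega) m hm))
        (mul_mem (by exact_mod_cast natCast_mem (Asub k) 2) (ih b (by omega) (m+1) (by omega)))

theorem hM : ∀ (f : Polynomial k) m, 2 ≤ m → C f * (X : Polynomial (Polynomial k)) ^ m ∈ Asub k := by
  intro f
  induction f using Polynomial.induction_on' with
  | add p q hp hq =>
    intro m hm
    rw [map_add, add_mul]
    exact add_mem (hp m hm) (hq m hm)
  | monomial n a =>
    intro m hm
    rw [← C_mul_X_pow_eq_monomial, map_mul, map_pow]
    have h1 : C (C a) * (C (X : Polynomial k)) ^ n * X ^ m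
        = C (C a) * ((C (X : Polynomial k)) ^ n * X ^ m) := by ring
    rw [h1]
    have h2 : (C (C a) : Polynomial (Polynomial k)) = algebraMap k _ a := rfl
    rw [h2]
    exact mul_mem (algebraMap_mem _ a) (hL k n m hm)

theorem hM' : ∀ q : Polynomial (Polynomial k), X ^ 2 * q ∈ Asub k := by
  intro q
  induction q using Polynomial.induction_on' with
  | add p q hp hq => rw [mul_add]; exact add_mem hp hq
  | monomial n a =>
    rw [← C_mul_X_pow_eq_monomial]
    have h1 : (X : Polynomial (Polynomial k)) ^ 2 * (C a * X ^ n) = C a * X ^ (n + 2) := by ring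
    rw [h1]
    exact hM k a (n+2) (by omega)

theorem hCC (a : k) : (C (C a) : Polynomial (Polynomial k)) ∈ Asub k := by
  have h : (C (C a) : Polynomial (Polynomial k)) = algebraMap k _ a := rfl
  rw [h]; exact algebraMap_mem _ a

theorem hV : ∀ n : ℕ,
    C ((X : Polynomial k) ^ (n+2)) + C (((n : Polynomial k) + 2) * X ^ n) * X ∈ Asub k := by
  intro n
  induction n using Nat.strong_induction_on with
  | _ n ih =>
    match n with
    | 0 =>
      have e : C ((X : Polynomial k) ^ (0+2)) + C ((((0:ℕ) : Polynomial k) + 2) * X ^ 0) * X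
          = (C (X : Polynomial k)) ^ 2 + 2 * X := by
        simp only [map_pow, Nat.cast_zero, zero_add, pow_zero, mul_one, map_ofNat]
      rw [e]; exact hu2 k
    | 1 =>
      have e : C ((X : Polynomial k) ^ (1+2)) + C ((((1:ℕ) : Polynomial k) + 2) * X ^ 1) * X
          = (C (X : Polynomial k)) ^ 3 + 3 * C (X : Polynomial k) * X := by
        simp only [map_pow, Nat.cast_one, pow_one, map_mul, map_add, map_one, map_ofNat]
        norm_num
      rw [e]; exact hu3 k
    | (m+2) =>
      have key : C ((X : Polynomial k) ^ (m+2+2)) + C ((((m+2:ℕ) : Polynomial k) + 2) * X ^ (m+2)) * X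
          = ((C (X : Polynomial k)) ^ 2 + 2 * X)
              * (C ((X : Polynomial k) ^ (m+2)) + C (((m : Polynomial k) + 2) * X ^ m) * X)
            - 2 * (((m : Polynomial (Polynomial k)) + 2) * ((C (X : Polynomial k)) ^ m * X ^ 2)) := by
        simp only [map_pow, map_mul, map_add, map_natCast, map_ofNat]
        push_cast
        ring
      rw [key]
      refine sub_mem (mul_mem (hu2 k) (ih m (by omega))) (mul_mem ?_ (mul_mem ?_ (hL k m 2 le_rfl)))
      · exact_mod_cast natCast_mem (Asub k) 2
      · exact add_mem (natCast_mem _ m) (by exact_mod_cast natCast_mem (Asub k) 2)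

theorem main_lemma : ∀ (N : ℕ) (f g : Polynomial k), f.natDegree ≤ N →
    (X : Polynomial k) * g = derivative f → C f + C g * X ∈ Asub k := by
  intro N
  induction N using Nat.strong_induction_on with
  | _ N ih =>
    intro f g hdeg hfg
    by_cases h1 : f.natDegree ≤ 1
    · have hf : f = C (f.coeff 1) * X + C (f.coeff 0) := eq_X_add_C_of_natDegree_le_one h1
      have hd : derivative f = C (f.coeff 1) := by
        conv_lhs => rw [hf]
        rw [derivative_add, derivative_C, derivative_C_mul, derivative_X, add_zero, mul_one]
      have hc : f.coeff 1 = 0 := by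
        have h0 := congrArg (fun p => Polynomial.coeff p 0) hfg
        exact (by simpa [hd, mul_coeff_zero, coeff_C, coeff_X_zero] using h0 : (0:k) = f.coeff 1).symm
      have hg : g = 0 := by
        have hz : (X : Polynomial k) * g = 0 := by rw [hfg, hd, hc, map_zero]
        exact (mul_eq_zero.mp hz).resolve_left X_ne_zero
      have hf' : f = C (f.coeff 0) := by
        conv_lhs => rw [hf, hc]
        rw [map_zero, zero_mul, zero_add]
      rw [hg, map_zero, zero_mul, add_zero]
      have hm := hCC k (f.coeff 0)
      rwa [← hf'] at hm
    · push_neg at h1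
      set n := f.natDegree with hn
      have hn2 : 2 ≤ n := h1
      set a := f.leadingCoeff with ha
      set f₁ := f.eraseLead with hf₁
      have hfe : f₁ + C a * X ^ n = f := f.eraseLead_add_C_mul_X_pow
      set g₁ := g - C ((n : k) * a) * X ^ (n - 2) with hg₁
      have hx : (X : Polynomial k) * (C ((n:k) * a) * X ^ (n-2)) = C (a * (n:k)) * X ^ (n-1) := by
        have h2 : (n - 2) + 1 = n - 1 := by omega
        calc (X : Polynomial k) * (C ((n:k) * a) * X ^ (n-2))
            = C ((n:k) * a) * (X ^ (n-2) * X) := by ring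
          _ = C ((n:k) * a) * X ^ ((n-2)+1) := by rw [← pow_succ]
          _ = C (a * (n:k)) * X ^ (n-1) := by rw [h2, mul_comm ((n:k)) a]
      have hder : (X : Polynomial k) * g₁ = derivative f₁ := by
        have hdf : derivative f = derivative f₁ + C (a * (n:k)) * X ^ (n-1) := by
          conv_lhs => rw [← hfe]
          rw [derivative_add, derivative_C_mul_X_pow]
        rw [hg₁, mul_sub, hfg, hx, hdf]
        ring
      have h1mem : C f₁ + C g₁ * X ∈ Asub k := by
        refine ih (N-1) (by omega) f₁ g₁ ?_ hder
        have h4 : f₁.natDegree ≤ f.natDegree - 1 := by rw [hf₁]; exact f.eraseLead_natDegree_le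
        omega
      have hcast : (((n - 2 : ℕ) : Polynomial k) + 2) = ((n : ℕ) : Polynomial k) := by
        have h3 : (n - 2) + 2 = n := by omega
        rw [← h3]
        push_cast
        ring
      have hg' : g = g₁ + C ((n:k) * a) * X ^ (n-2) := by rw [hg₁]; ring
      have key : C f + C g * X = (C f₁ + C g₁ * X)
          + C (C a) * (C ((X : Polynomial k) ^ ((n-2)+2))
              + C ((((n-2 : ℕ) : Polynomial k) + 2) * X ^ (n-2)) * X) := by
        have h3 : (n - 2) + 2 = n := by omega
        rw [h3, hcast]
        conv_lhs => rw [← hfe, hg']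
        simp only [map_add, map_mul, map_pow, map_natCast]
        ring
      rw [key]
      exact add_mem h1mem (mul_mem (hCC k a) (hV k (n-2)))

theorem le_adjoin : Ssub k ≤ Asub k := by
  intro p hp
  rw [mem_Ssub] at hp
  have hdvd : (X : Polynomial (Polynomial k)) ^ 2 ∣ (p - (C (p.coeff 0) + C (p.coeff 1) * X)) := by
    rw [X_pow_dvd_iff]
    intro d hd
    interval_cases d <;>
      simp [coeff_sub, coeff_add, coeff_C, coeff_C_mul, coeff_X_zero, coeff_X_one]
  obtain ⟨r, hr⟩ := hdvd
  have hp' : p = (C (p.coeff 0) + C (p.coeff 1) * X) + X ^ 2 * r := by rw [← hr]; ring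
  rw [hp']
  exact add_mem (main_lemma k (p.coeff 0).natDegree (p.coeff 0) (p.coeff 1) le_rfl hp) (hM' k r)

end Aux

/-- The subring `R ⊂ k[x,t]` of polynomials `∑ fₘ(x) tᵐ` with `x·f₁ = f₀'`
is generated as a `k`-algebra by `x²+2t, x³+3xt, t², xt², t³, xt³`.
Here `k[x,t]` is modelled as `(k[x])[t]`, with `x` the inner and `t` the outer variable. -/
theorem stmt_5 (k : Type*) [Field k] :
    (Algebra.adjoin k
        ({(C (X : Polynomial k)) ^ 2 + 2 * X,
          (C (X : Polynomial k)) ^ 3 + 3 * C (X : Polynomial k) * X,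
          X ^ 2,
          C (X : Polynomial k) * X ^ 2,
          X ^ 3,
          C (X : Polynomial k) * X ^ 3} :
          Set (Polynomial (Polynomial k))) :
        Set (Polynomial (Polynomial k)))
      = {p : Polynomial (Polynomial k) |
          (X : Polynomial k) * p.coeff 1 = derivative (p.coeff 0)} := by
  ext p
  constructor
  · intro h
    exact adjoin_le k h
  · intro h
    exact le_adjoin k h
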